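/- Let F: ℝⁿ → ℝ be continuous and affine linear on cells of a finite polyhedral decomposition M of ℝⁿ, and let t be a transversal threshold for F and M. Then the level set F⁻¹({t}) equals the topological boundary of the sublevel set F⁻¹((−∞,t)) and also equals the topological boundary of the superlevel set F⁻¹((t,∞)). -/

import Mathlib

open Matrix Filter Topology

/-- A polyhedral set in `ℝⁿ`: a finite intersection of closed affine half-spaces. -/
def IsPolyhedral {n : ℕ} (S : Set (Fin n → ℝ)) : Prop :=
  ∃ (k : ℕ) (w : Fin k → (Fin n → ℝ)) (c : Fin k → ℝ),
    S = {x | ∀ j, c j ≤ w j ⬝ᵥ x}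

/-- `Q` is a face of `P`: either `P` itself or the intersection of `P` with a supporting
hyperplane (this includes the empty face). -/
def IsFaceOf {n : ℕ} (Q P : Set (Fin n → ℝ)) : Prop :=
  Q = P ∨ ∃ (v : Fin n → ℝ) (c : ℝ),
    (∀ x ∈ P, v ⬝ᵥ x ≤ c) ∧ Q = P ∩ {x | v ⬝ᵥ x = c}

/-- A finite polyhedral complex: a finite collection of polyhedral sets closed under
taking faces, in which any two cells intersect in a common face. -/
def IsPolyhedralComplex {n : ℕ} (𝒞 : Set (Set (Fin n → ℝ))) : Prop :=
  𝒞.Finite ∧ (∀ P ∈ 𝒞, IsPolyhedral P) ∧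
  (∀ P ∈ 𝒞, ∀ Q, IsFaceOf Q P → Q ∈ 𝒞) ∧
  (∀ P ∈ 𝒞, ∀ Q ∈ 𝒞, IsFaceOf (P ∩ Q) P ∧ IsFaceOf (P ∩ Q) Q)

/-- `F` restricted to each cell of `𝒞` is an affine map. -/
def AffineOnCells {n : ℕ} (F : (Fin n → ℝ) → ℝ) (𝒞 : Set (Set (Fin n → ℝ))) : Prop :=
  ∀ P ∈ 𝒞, ∃ (w : Fin n → ℝ) (c : ℝ), ∀ x ∈ P, F x = w ⬝ᵥ x + c

/-- The threshold `t` is transversal for `F` and the complex `𝒞`: every point of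
`F⁻¹({t})` has an `F`-nonconstant cellular neighborhood, i.e. `F` is nonconstant on
every cell containing the point. -/
def TransversalThreshold {n : ℕ} (F : (Fin n → ℝ) → ℝ)
    (𝒞 : Set (Set (Fin n → ℝ))) (t : ℝ) : Prop :=
  ∀ p : Fin n → ℝ, F p = t → ∀ P ∈ 𝒞, p ∈ P → ∃ x ∈ P, ∃ y ∈ P, F x ≠ F y

lemma inter_mem_of_complex {n : ℕ} {𝒞 : Set (Set (Fin n → ℝ))}
    (h𝒞 : IsPolyhedralComplex 𝒞) {P Q : Set (Fin n → ℝ)}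
    (hP : P ∈ 𝒞) (hQ : Q ∈ 𝒞) : P ∩ Q ∈ 𝒞 :=
  h𝒞.2.2.1 P hP _ (h𝒞.2.2.2 P hP Q hQ).1

lemma sInter_mem_of_complex {n : ℕ} {𝒞 : Set (Set (Fin n → ℝ))}
    (h𝒞 : IsPolyhedralComplex 𝒞) (S : Set (Set (Fin n → ℝ)))
    (hfin : S.Finite) (hS : S ⊆ 𝒞) (hne : S.Nonempty) : ⋂₀ S ∈ 𝒞 := by
  induction S, hfin using Set.Finite.induction_on with
  | empty => exact absurd hne (by simp)
  | @insert P S hPS hSfin ih =>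
    rcases S.eq_empty_or_nonempty with rfl | hSne
    · simpa using hS (Set.mem_insert P ∅)
    · rw [Set.sInter_insert]
      exact inter_mem_of_complex h𝒞 (hS (Set.mem_insert P S))
        (ih (fun Q hQ => hS (Set.mem_insert_of_mem P hQ)) hSne)

/-- Key local lemma: at any point of the level set, both strict sublevel and superlevel
sets accumulate. -/
lemma mem_closure_both {n : ℕ}
    (𝒞 : Set (Set (Fin n → ℝ))) (h𝒞 : IsPolyhedralComplex 𝒞)
    (hcover : ⋃₀ 𝒞 = Set.univ)
    (F : (Fin n → ℝ) → ℝ) (haff : AffineOnCells F 𝒞)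
    (t : ℝ) (ht : TransversalThreshold F 𝒞 t)
    (p : Fin n → ℝ) (hp : F p = t) :
    p ∈ closure (F ⁻¹' Set.Iio t) ∧ p ∈ closure (F ⁻¹' Set.Ioi t) := by
  obtain ⟨hfin, hpoly, hface, hpair⟩ := h𝒞
  set S : Set (Set (Fin n → ℝ)) := {P | P ∈ 𝒞 ∧ p ∈ P} with hSdef
  have hS𝒞 : S ⊆ 𝒞 := fun P hP => hP.1
  have hSne : S.Nonempty := by
    have hpmem : p ∈ ⋃₀ 𝒞 := by rw [hcover]; trivial
    obtain ⟨P, hP, hpP⟩ := hpmem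
    exact ⟨P, hP, hpP⟩
  set R := ⋂₀ S with hRdef
  have hR𝒞 : R ∈ 𝒞 :=
    sInter_mem_of_complex ⟨hfin, hpoly, hface, hpair⟩ S (hfin.subset hS𝒞) hS𝒞 hSne
  have hpR : p ∈ R := fun P hP => hP.2
  have hRmin : ∀ P ∈ 𝒞, p ∈ P → R ⊆ P := fun P hP hpP => Set.sInter_subset_of_mem ⟨hP, hpP⟩
  obtain ⟨wF, cF, hFaff⟩ := haff R hR𝒞
  obtain ⟨x, hx, y, hy, hxy⟩ := ht p hp R hR𝒞 hpR
  obtain ⟨q, hq, hqt⟩ : ∃ q ∈ R, F q ≠ t := by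
    by_cases h : F x = t
    · exact ⟨y, hy, fun hyt => hxy (h.trans hyt.symm)⟩
    · exact ⟨x, hx, h⟩
  obtain ⟨k, w, c, hRrep⟩ := hpoly R hR𝒞
  -- active constraints are tight on all of R
  have hactive : ∀ j, w j ⬝ᵥ p = c j → ∀ z ∈ R, w j ⬝ᵥ z = c j := by
    intro j hj z hzR
    by_contra hne
    have hub : ∀ u ∈ R, (-(w j)) ⬝ᵥ u ≤ -(c j) := by
      intro u hu
      have h1 : c j ≤ w j ⬝ᵥ u := by rw [hRrep] at hu; exact hu j
      rw [neg_dotProduct]; linarith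
    have hR'𝒞 : R ∩ {u | (-(w j)) ⬝ᵥ u = -(c j)} ∈ 𝒞 :=
      hface R hR𝒞 _ (Or.inr ⟨-(w j), -(c j), hub, rfl⟩)
    have hpR' : p ∈ R ∩ {u | (-(w j)) ⬝ᵥ u = -(c j)} :=
      ⟨hpR, by simp only [Set.mem_setOf_eq, neg_dotProduct, hj]⟩
    have hz' : z ∈ R ∩ {u | (-(w j)) ⬝ᵥ u = -(c j)} := hRmin _ hR'𝒞 hpR' hzR
    have := hz'.2
    rw [Set.mem_setOf_eq, neg_dotProduct, neg_inj] at this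
    exact hne this
  -- the segment through p in direction q - p stays in R for small parameters of both signs
  set φ : ℝ → (Fin n → ℝ) := fun s => p + s • (q - p) with hφdef
  have hφ0 : φ 0 = p := by simp [hφdef]
  have hdot : ∀ (v : Fin n → ℝ) (s : ℝ),
      v ⬝ᵥ φ s = v ⬝ᵥ p + s * (v ⬝ᵥ q - v ⬝ᵥ p) := by
    intro v s
    simp [hφdef, dotProduct_add, dotProduct_smul, dotProduct_sub, smul_eq_mul]
  have hmem : ∀ᶠ s in 𝓝 (0:ℝ), φ s ∈ R := by
    have : ∀ j : Fin k, ∀ᶠ s in 𝓝 (0:ℝ), c j ≤ w j ⬝ᵥ φ s := by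
      intro j
      have hpj : c j ≤ w j ⬝ᵥ p := by rw [hRrep] at hpR; exact hpR j
      rcases eq_or_lt_of_le hpj with heq | hlt
      · have hqj : w j ⬝ᵥ q = c j := hactive j heq.symm q hq
        filter_upwards with s
        rw [hdot, hqj, ← heq]
        simp
      · have hcont : Continuous fun s : ℝ => w j ⬝ᵥ φ s := by
          simp only [hdot]; continuity
        have htend : Filter.Tendsto (fun s : ℝ => w j ⬝ᵥ φ s) (𝓝 0) (𝓝 (w j ⬝ᵥ p)) := by
          have := hcont.tendsto 0
          rwa [hφ0] at this
        exact (htend.eventually (eventually_gt_nhds hlt)).mono fun s hs => le_of_lt hs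
    have := Filter.eventually_all.2 this
    exact this.mono fun s hs => by rw [hRrep]; exact hs
  -- value of F along the segment
  set d : ℝ := F q - t with hddef
  have hd : d ≠ 0 := sub_ne_zero.2 hqt
  have hFval : ∀ s : ℝ, φ s ∈ R → F (φ s) = t + s * d := by
    intro s hs
    have h1 := hFaff (φ s) hs
    have h2 := hFaff p hpR
    have h3 := hFaff q hq
    rw [h1, hdot]
    rw [hp] at h2
    rw [hddef, h3, h2]
    ring
  have hφcont : Continuous φ := by
    apply continuous_const.add
    exact continuous_id.smul continuous_const
  have key : ∀ (A : Set ℝ) (l : Filter ℝ), l.NeBot → l ≤ 𝓝 0 →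
      (∀ᶠ s in l, t + s * d ∈ A) → p ∈ closure (F ⁻¹' A) := by
    intro A l hl hle hA
    haveI := hl
    have h1 : Filter.Tendsto φ l (𝓝 p) := by
      have := hφcont.tendsto 0
      rw [hφ0] at this
      exact this.mono_left hle
    have h2 : ∀ᶠ s in l, φ s ∈ F ⁻¹' A := by
      filter_upwards [hA, hmem.filter_mono hle] with s h h'
      simpa [hFval s h'] using h
    exact mem_closure_of_tendsto h1 h2
  rcases hd.lt_or_gt with hdneg | hdpos
  · constructor
    · refine key _ (𝓝[>] 0) (by infer_instance) nhdsWithin_le_nhds ?_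
      filter_upwards [self_mem_nhdsWithin] with s (hs : (0:ℝ) < s)
      simpa using mul_neg_of_pos_of_neg hs hdneg
    · refine key _ (𝓝[<] 0) (by infer_instance) nhdsWithin_le_nhds ?_
      filter_upwards [self_mem_nhdsWithin] with s (hs : s < (0:ℝ))
      simpa using mul_pos_of_neg_of_neg hs hdneg
  · constructor
    · refine key _ (𝓝[<] 0) (by infer_instance) nhdsWithin_le_nhds ?_
      filter_upwards [self_mem_nhdsWithin] with s (hs : s < (0:ℝ))
      simpa using mul_neg_of_neg_of_pos hs hdpos
    · refine key _ (𝓝[>] 0) (by infer_instance) nhdsWithin_le_nhds ?_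
      filter_upwards [self_mem_nhdsWithin] with s (hs : (0:ℝ) < s)
      simpa using mul_pos hs hdpos

/-- If `t` is a transversal threshold for `F` and a finite polyhedral
decomposition `𝒞` of `ℝⁿ` on whose cells `F` is affine, then the level set `F⁻¹({t})`
is the topological boundary of the sublevel set `F⁻¹((-∞,t))` and also of the superlevel
set `F⁻¹((t,∞))`. -/
theorem level_set_eq_frontier_of_decision_regions {n : ℕ}
    (𝒞 : Set (Set (Fin n → ℝ))) (h𝒞 : IsPolyhedralComplex 𝒞)
    (hcover : ⋃₀ 𝒞 = Set.univ)
    (F : (Fin n → ℝ) → ℝ) (hF : Continuous F) (haff : AffineOnCells F 𝒞)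
    (t : ℝ) (ht : TransversalThreshold F 𝒞 t) :
    F ⁻¹' {t} = frontier (F ⁻¹' Set.Iio t) ∧
    F ⁻¹' {t} = frontier (F ⁻¹' Set.Ioi t) := by

  have hopen₁ : IsOpen (F ⁻¹' Set.Iio t) := isOpen_Iio.preimage hF
  have hopen₂ : IsOpen (F ⁻¹' Set.Ioi t) := isOpen_Ioi.preimage hF
  have hcl₁ : closure (F ⁻¹' Set.Iio t) ⊆ F ⁻¹' Set.Iic t :=
    closure_minimal (Set.preimage_mono Set.Iio_subset_Iic_self) (isClosed_Iic.preimage hF)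
  have hcl₂ : closure (F ⁻¹' Set.Ioi t) ⊆ F ⁻¹' Set.Ici t :=
    closure_minimal (Set.preimage_mono Set.Ioi_subset_Ici_self) (isClosed_Ici.preimage hF)
  constructor
  · apply Set.Subset.antisymm
    · intro p hp
      have hpt : F p = t := hp
      rw [hopen₁.frontier_eq]
      exact ⟨(mem_closure_both 𝒞 h𝒞 hcover F haff t ht p hpt).1,
        by simp [Set.mem_preimage, hpt]⟩
    · intro p hp
      rw [hopen₁.frontier_eq] at hp
      have h1 : F p ≤ t := hcl₁ hp.1
      have h2 : ¬ F p < t := hp.2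
      simpa using le_antisymm h1 (not_lt.1 h2)
  · apply Set.Subset.antisymm
    · intro p hp
      have hpt : F p = t := hp
      rw [hopen₂.frontier_eq]
      exact ⟨(mem_closure_both 𝒞 h𝒞 hcover F haff t ht p hpt).2,
        by simp [Set.mem_preimage, hpt]⟩
    · intro p hp
      rw [hopen₂.frontier_eq] at hp
      have h1 : t ≤ F p := hcl₂ hp.1
      have h2 : ¬ t < F p := hp.2
      simpa using le_antisymm (not_lt.1 h2) h1
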